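/- If T is a tree with at least two vertices and n_1 leaves, then F_t(T) ≥ n_1. -/
import Mathlib


/-! Basic definitions: (zero) forcing, total forcing, forcing numbers. -/

namespace TotalForcing

variable {V : Type*}

/-- The set of vertices eventually colored by the forcing process starting from `S`:
a vertex is colored if it is in `S`, or if some colored vertex `u` is adjacent to it
while all other neighbors of `u` are already colored (so `v` is the unique
non-colored neighbor of `u`, and `u` forces `v`). -/
inductive Forces (G : SimpleGraph V) (S : Set V) : V → Prop
  | mem : ∀ {v : V}, v ∈ S → Forces G S v
  | force : ∀ {u v : V}, G.Adj u v → Forces G S u →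
      (∀ w, G.Adj u w → w ≠ v → Forces G S w) → Forces G S v

/-- `S` is a forcing set of `G` if the forcing process colors every vertex. -/
def IsForcingSet (G : SimpleGraph V) (S : Set V) : Prop := ∀ v : V, Forces G S v

/-- A total forcing set is a forcing set inducing a subgraph without isolated vertices. -/
def IsTotalForcingSet (G : SimpleGraph V) (S : Set V) : Prop :=
  IsForcingSet G S ∧ ∀ v ∈ S, ∃ u ∈ S, G.Adj v u

/-- The forcing number `F(G)`. -/
noncomputable def forcingNumber (G : SimpleGraph V) [Fintype V] : ℕ :=
  sInf {n : ℕ | ∃ S : Finset V, S.card = n ∧ IsForcingSet G ↑S}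

/-- The total forcing number `F_t(G)`. -/
noncomputable def totalForcingNumber (G : SimpleGraph V) [Fintype V] : ℕ :=
  sInf {n : ℕ | ∃ S : Finset V, S.card = n ∧ IsTotalForcingSet G ↑S}

/-- A leaf is a vertex of degree 1. -/
def IsLeaf (G : SimpleGraph V) (v : V) : Prop := (G.neighborSet v).ncard = 1

/-- The number of leaves of `G`. -/
noncomputable def numLeaves (G : SimpleGraph V) : ℕ := {v : V | IsLeaf G v}.ncard

/-- A strong support vertex is a vertex with at least two leaf neighbors. -/
def IsStrongSupport (G : SimpleGraph V) (v : V) : Prop :=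
  ∃ x y : V, x ≠ y ∧ G.Adj v x ∧ G.Adj v y ∧ IsLeaf G x ∧ IsLeaf G y

end TotalForcing

namespace TotalForcing

/-- One step of the forcing process. -/
def step (G : SimpleGraph V) (A : Set V) : Set V :=
  A ∪ {v | ∃ u ∈ A, G.Adj u v ∧ ∀ w, G.Adj u w → w ≠ v → w ∈ A}

lemma subset_step (G : SimpleGraph V) (A : Set V) : A ⊆ step G A :=
  Set.subset_union_left

lemma subset_iterate (G : SimpleGraph V) (k : ℕ) (A : Set V) :
    A ⊆ (step G)^[k] A := by
  induction k generalizing A with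
  | zero => exact fun x hx => hx
  | succ k ih =>
    rw [Function.iterate_succ_apply]
    exact (subset_step G A).trans (ih (step G A))

lemma iterate_mono (G : SimpleGraph V) (A : Set V) {m n : ℕ} (h : m ≤ n) :
    (step G)^[m] A ⊆ (step G)^[n] A := by
  obtain ⟨k, rfl⟩ := Nat.exists_eq_add_of_le h
  rw [Nat.add_comm, Function.iterate_add_apply]
  exact subset_iterate G k _

lemma forces_exists [Fintype V] {G : SimpleGraph V} {S : Set V} {v : V}
    (h : Forces G S v) : ∃ n, v ∈ (step G)^[n] S := by
  induction h with
  | mem hv => exact ⟨0, hv⟩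
  | @force u v hadj hu hall ihu ihall =>
    obtain ⟨nu, hnu⟩ := ihu
    have hch : ∀ w : V, ∃ n, (G.Adj u w → w ≠ v → w ∈ (step G)^[n] S) := by
      intro w
      by_cases hw : G.Adj u w ∧ w ≠ v
      · obtain ⟨n, hn⟩ := ihall w hw.1 hw.2
        exact ⟨n, fun _ _ => hn⟩
      · exact ⟨0, fun h1 h2 => absurd ⟨h1, h2⟩ hw⟩
    choose g hg using hch
    classical
    refine ⟨(nu ⊔ Finset.univ.sup g) + 1, ?_⟩
    rw [Function.iterate_succ_apply']
    refine Or.inr ⟨u, ?_, hadj, ?_⟩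
    · exact iterate_mono G S (le_sup_left) hnu
    · intro w haw hwv
      exact iterate_mono G S
        (le_sup_of_le_right (Finset.le_sup (Finset.mem_univ w))) (hg w haw hwv)

lemma card_le_of_TFS {V : Type*} [Fintype V] (G : SimpleGraph V) (S : Finset V)
    (hS : IsTotalForcingSet G ↑S) : numLeaves G ≤ S.card := by
  classical
  set A : Set V := ↑S with hA
  have htime : ∀ v : V, ∃ n, v ∈ (step G)^[n] A := fun v => forces_exists (hS.1 v)
  set t : V → ℕ := fun v => Nat.find (htime v) with htdef
  have ht_spec : ∀ v, v ∈ (step G)^[t v] A := fun v => Nat.find_spec (htime v)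
  have ht_min : ∀ v n, v ∈ (step G)^[n] A → t v ≤ n := fun v n h => Nat.find_min' (htime v) h
  have ht_pos : ∀ v, v ∉ A → 1 ≤ t v := by
    intro v hv
    rcases Nat.eq_zero_or_pos (t v) with h0 | h
    · have := ht_spec v
      rw [h0] at this
      exact absurd this hv
    · exact h
  have hpredE : ∀ v, ∃ u, v ∉ A →
      (u ∈ (step G)^[t v - 1] A ∧ G.Adj u v ∧
        ∀ w, G.Adj u w → w ≠ v → w ∈ (step G)^[t v - 1] A) := by
    intro v
    by_cases hv : v ∈ A
    · exact ⟨v, fun h => absurd hv h⟩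
    · have h1 : 1 ≤ t v := ht_pos v hv
      have h2 : v ∈ (step G)^[(t v - 1) + 1] A := by
        rw [Nat.sub_add_cancel h1]; exact ht_spec v
      rw [Function.iterate_succ_apply'] at h2
      have h3 : v ∉ (step G)^[t v - 1] A := fun hmem => by
        have := ht_min v _ hmem; omega
      rcases h2 with h2 | ⟨u, huA, hadj, hall⟩
      · exact absurd h2 h3
      · exact ⟨u, fun _ => ⟨huA, hadj, hall⟩⟩
  choose pred hpred using hpredE
  have htpred : ∀ v, v ∉ A → t (pred v) < t v := by
    intro v hv
    have h1 := ht_min (pred v) _ (hpred v hv).1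
    have h2 := ht_pos v hv
    omega
  have hadjpred : ∀ v, v ∉ A → G.Adj (pred v) v := fun v hv => (hpred v hv).2.1
  have hinj : ∀ v w, v ∉ A → w ∉ A → pred v = pred w → v = w := by
    have key : ∀ x y, x ∉ A → y ∉ A → pred x = pred y → x ≠ y → t x ≤ t y → False := by
      intro x y hx hy hxy hne hle
      have hAdj : G.Adj (pred x) y := by rw [hxy]; exact hadjpred y hy
      have h1 := (hpred x hx).2.2 y hAdj (Ne.symm hne)
      have h2 := ht_min y _ h1
      have h3 := ht_pos x hx
      omega
    intro v w hv hw he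
    by_contra hne
    rcases le_total (t v) (t w) with h | h
    · exact key v w hv hw he hne h
    · exact key w v hw hv he.symm (Ne.symm hne) h
  set p : V → V := fun v => if v ∈ A then v else pred v with hp
  have hpN : ∀ v, v ∉ A → p v = pred v := fun v hv => if_neg hv
  have hpinj : ∀ x z, x ∉ A → z ∉ A → p x = p z → x = z := by
    intro x z hx hz h
    rw [hpN x hx, hpN z hz] at h
    exact hinj x z hx hz h
  have hreach : ∀ v, ∃ k, p^[k] v ∈ A := by
    have key : ∀ n v, t v ≤ n → ∃ k, p^[k] v ∈ A := by
      intro n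
      induction n with
      | zero =>
        intro v hv
        refine ⟨0, ?_⟩
        by_contra h
        have := ht_pos v h
        omega
      | succ n ih =>
        intro v hv
        by_cases h : v ∈ A
        · exact ⟨0, h⟩
        · have ht' : t (p v) ≤ n := by
            rw [hpN v h]
            have := htpred v h
            omega
          obtain ⟨k, hk⟩ := ih (p v) ht'
          exact ⟨k + 1, by rwa [Function.iterate_succ_apply]⟩
    exact fun v => key (t v) v le_rfl
  set len : V → ℕ := fun v => Nat.find (hreach v) with hlendef
  have hlen_spec : ∀ v, p^[len v] v ∈ A := fun v => Nat.find_spec (hreach v)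
  have hlen_min : ∀ v, ∀ j < len v, p^[j] v ∉ A := fun v j hj => Nat.find_min (hreach v) hj
  set f : V → V := fun v => p^[len v] v with hf
  have traj : ∀ a b x y, a ≤ b → p^[a] x = p^[b] y →
      (∀ j < a, p^[j] x ∉ A) → (∀ j < b, p^[j] y ∉ A) → x = p^[b - a] y := by
    intro a
    induction a with
    | zero => intro b x y _ h _ _; simpa using h
    | succ a ih =>
      intro b x y hab h hx hy
      have hab' : a ≤ b := by omega
      have h' : p^[a] (p x) = p^[b] y := by rwa [← Function.iterate_succ_apply]
      have hx' : ∀ j < a, p^[j] (p x) ∉ A := by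
        intro j hj
        rw [← Function.iterate_succ_apply]
        exact hx (j + 1) (by omega)
      have h1 : p x = p^[b - a] y := ih b (p x) y hab' h' hx' hy
      have hd : b - a = (b - (a + 1)) + 1 := by omega
      rw [hd, Function.iterate_succ_apply'] at h1
      have hz : p^[b - (a + 1)] y ∉ A := hy _ (by omega)
      have hxA : x ∉ A := by simpa using hx 0 (by omega)
      exact hpinj x _ hxA hz h1
  have leafnb : ∀ v, IsLeaf G v → ∀ x y, G.Adj v x → G.Adj v y → x = y := by
    intro v hv x y hx hy
    obtain ⟨m, hm⟩ := Set.ncard_eq_one.mp hv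
    have h1 : x ∈ G.neighborSet v := hx
    have h2 : y ∈ G.neighborSet v := hy
    rw [hm, Set.mem_singleton_iff] at h1 h2
    rw [h1, h2]
  have main : ∀ x y, IsLeaf G x → IsLeaf G y → len x ≤ len y → f x = f y → x = y := by
    intro x y hx hy hle hfe
    have hx1 : x = p^[len y - len x] y :=
      traj (len x) (len y) x y hle hfe (hlen_min x) (hlen_min y)
    by_cases hd : len y - len x = 0
    · rw [hd] at hx1; simpa using hx1
    · exfalso
      have hd1 : len y - len x = (len y - len x - 1) + 1 := by omega
      set z := p^[len y - len x - 1] y with hz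
      have hzA : z ∉ A := hlen_min y _ (by omega)
      have hx2 : x = p z := by rw [hx1, hd1, Function.iterate_succ_apply']
      have hadjxz : G.Adj x z := by
        rw [hx2, hpN z hzA]
        exact hadjpred z hzA
      by_cases hxA : x ∈ A
      · obtain ⟨u, huS, hadjxu⟩ := hS.2 x hxA
        have heq : u = z := leafnb x hx u z hadjxu hadjxz
        exact hzA (heq ▸ huS)
      · have h1 : G.Adj x (pred x) := (hadjpred x hxA).symm
        have h2 : pred x = z := leafnb x hx (pred x) z h1 hadjxz
        have t1 : t z < t x := by rw [← h2]; exact htpred x hxA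
        have t2 : t x < t z := by
          have h3 := htpred z hzA
          rw [← hpN z hzA, ← hx2] at h3
          exact h3
        omega
  have hinjOn : Set.InjOn f {v | IsLeaf G v} := by
    intro x hx y hy hfe
    rcases le_total (len x) (len y) with h | h
    · exact main x y hx hy h hfe
    · exact (main y x hy hx h hfe.symm).symm
  have himg : f '' {v | IsLeaf G v} ⊆ A := by
    rintro _ ⟨v, _, rfl⟩
    exact hlen_spec v
  calc numLeaves G = ({v | IsLeaf G v}).ncard := rfl
    _ = (f '' {v | IsLeaf G v}).ncard := (Set.ncard_image_of_injOn hinjOn).symm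
    _ ≤ A.ncard := Set.ncard_le_ncard himg (S.finite_toSet)
    _ = S.card := Set.ncard_coe_finset S

/-- If `T` is a tree with at least two vertices and `n₁` leaves,
then `F_t(T) ≥ n₁`. -/
theorem stmt6 {V : Type*} [Fintype V] (T : SimpleGraph V)
    (hT : T.IsTree) (h2 : 2 ≤ Fintype.card V) :
    numLeaves T ≤ totalForcingNumber T := by
  classical
  have hSet : IsTotalForcingSet T ↑(Finset.univ : Finset V) := by
    constructor
    · intro v
      exact Forces.mem (by simp)
    · intro v _
      obtain ⟨u, hu⟩ := Fintype.exists_ne_of_one_lt_card h2 v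
      obtain ⟨w⟩ := hT.isConnected.preconnected v u
      cases w with
      | nil => exact absurd rfl (Ne.symm hu)
      | cons h _ => exact ⟨_, by simp, h⟩
  refine le_csInf ⟨Fintype.card V, Finset.univ, by simp, hSet⟩ ?_
  rintro n ⟨S, rfl, hS⟩
  exact card_le_of_TFS T S hS

end TotalForcing
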